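/- arXiv:1111.7208 — 4 statements merged into one kernel-verified Lean document; each statement's English description precedes it below -/
import Mathlib

section
/- Let L₀ := -Δ_z + α z·∇_z - 2α acting on functions on ℝ^n, with α > 0. Then for k = 0 or k = 2, and any bounded function g with ⟨z⟩^{-k} g bounded, and any r > 0, one has ‖⟨z⟩^{-k} e^{-rL₀} g‖_∞ ≤ C e^{2αr} ‖⟨z⟩^{-k} g‖_∞, where ⟨z⟩ = (1+|z|²)^{1/2} and e^{-rL₀} is the (positivity-preserving) semigroup generated by -L₀. -/
/-- Weighted `L^∞` bound for the semigroup `e^{-rL₀}`, `L₀ = -Δ + αz·∇ - 2α`: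
for `k = 0, 2`, `‖⟨z⟩^{-k} e^{-rL₀} g‖_∞ ≤ C e^{2αr} ‖⟨z⟩^{-k} g‖_∞`.
The semigroup is encoded abstractly as a positivity-preserving linear map `T`
with `T 1 = e^{2αr} 1` and `T(α|z|² - n) = α|z|² - n`. -/
theorem stmt6 {n : ℕ} (α r : ℝ) (hα : 0 < α) (hr : 0 < r)
    (T : (EuclideanSpace ℝ (Fin n) → ℝ) →ₗ[ℝ] (EuclideanSpace ℝ (Fin n) → ℝ))
    (hpos : ∀ f g : EuclideanSpace ℝ (Fin n) → ℝ,
      (∀ z, f z ≤ g z) → ∀ z, T f z ≤ T g z)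
    (hone : T (fun _ => 1) = fun _ => Real.exp (2 * α * r))
    (heig : T (fun z => α * ‖z‖ ^ 2 - n) = fun z => α * ‖z‖ ^ 2 - n) :
    ∀ k : ℕ, k = 0 ∨ k = 2 →
      ∃ C > 0, ∀ g : EuclideanSpace ℝ (Fin n) → ℝ, ∀ M : ℝ,
        (∀ z, |g z| ≤ M * (1 + ‖z‖ ^ 2) ^ ((k : ℝ) / 2)) →
        ∀ z, |T g z| ≤ C * Real.exp (2 * α * r) * M * (1 + ‖z‖ ^ 2) ^ ((k : ℝ) / 2) := by
  intro k hk
  have hE : 1 ≤ Real.exp (2 * α * r) := Real.one_le_exp (by positivity)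
  have hE0 : 0 < Real.exp (2 * α * r) := Real.exp_pos _
  set E := Real.exp (2 * α * r) with hEdef
  have ha : (0:ℝ) ≤ (n : ℝ) / α := by positivity
  refine ⟨1 + (n : ℝ) / α, by positivity, ?_⟩
  intro g M hg z
  have hM : 0 ≤ M := by
    have h1 := hg z
    have h2 : (0:ℝ) < (1 + ‖z‖ ^ 2) ^ ((k:ℝ)/2) := Real.rpow_pos_of_pos (by positivity) _
    nlinarith [abs_nonneg (g z)]
  rcases hk with hk | hk
  · subst hk
    simp only [Nat.cast_zero, zero_div, Real.rpow_zero, mul_one] at hg ⊢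
    have hub : T g z ≤ M * E := by
      have h1 : ∀ w, g w ≤ (M • (fun _ => (1:ℝ))) w := by
        intro w; simpa using (abs_le.mp (hg w)).2
      have h2 := hpos _ _ h1 z
      rw [map_smul, hone] at h2
      simpa using h2
    have hlb : -(M * E) ≤ T g z := by
      have h1 : ∀ w, ((-M) • (fun _ => (1:ℝ))) w ≤ g w := by
        intro w
        have := (abs_le.mp (hg w)).1
        simpa using this
      have h2 := hpos _ _ h1 z
      rw [map_smul, hone] at h2
      simp only [Pi.smul_apply, smul_eq_mul] at h2
      linarith
    rw [abs_le]
    constructor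
    · nlinarith [mul_nonneg hM hE0.le]
    · nlinarith [mul_nonneg hM hE0.le]
  · subst hk
    have e1 : ((2:ℕ):ℝ)/2 = 1 := by norm_num
    simp only [e1, Real.rpow_one] at hg ⊢
    have hdecomp : (fun w : EuclideanSpace ℝ (Fin n) => M * (1 + ‖w‖^2)) =
        (M/α) • (fun w : EuclideanSpace ℝ (Fin n) => α*‖w‖^2 - (n:ℝ)) +
        (M*(n:ℝ)/α + M) • (fun _ : EuclideanSpace ℝ (Fin n) => (1:ℝ)) := by
      funext w
      simp only [Pi.add_apply, Pi.smul_apply, smul_eq_mul]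
      field_simp
      ring
    have hTh : T (fun w => M * (1 + ‖w‖^2)) z
        = (M/α)*(α*‖z‖^2 - (n:ℝ)) + (M*(n:ℝ)/α + M)*E := by
      rw [hdecomp, map_add, map_smul, map_smul, heig, hone]
      simp [smul_eq_mul]
    have hTh' : T (fun w => M * (1 + ‖w‖^2)) z
        = M*‖z‖^2 - M*((n:ℝ)/α) + (M*((n:ℝ)/α) + M)*E := by
      rw [hTh]; field_simp
    have hub : T g z ≤ T (fun w => M * (1 + ‖w‖^2)) z :=
      hpos _ _ (fun w => (abs_le.mp (hg w)).2) z
    have hlb : -(T (fun w => M * (1 + ‖w‖^2)) z) ≤ T g z := by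
      have h1 : ∀ w, (-(fun w : EuclideanSpace ℝ (Fin n) => M * (1 + ‖w‖^2))) w ≤ g w := by
        intro w
        have := (abs_le.mp (hg w)).1
        simpa using this
      have h2 := hpos _ _ h1 z
      rw [map_neg] at h2
      simpa using h2
    have hs : (0:ℝ) ≤ ‖z‖^2 := sq_nonneg _
    have key : T (fun w => M * (1 + ‖w‖^2)) z ≤ (1 + (n:ℝ)/α) * E * M * (1 + ‖z‖^2) := by
      rw [hTh']
      nlinarith [mul_nonneg (mul_nonneg hM hs) (sub_nonneg.mpr hE),
        mul_nonneg ha (mul_nonneg hM hs), mul_nonneg (mul_nonneg ha hM) hE0.le,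
        mul_nonneg (mul_nonneg (mul_nonneg ha hM) hs) hE0.le]
    rw [abs_le]
    constructor
    · linarith
    · linarith
end

section
/- Let f : ℝ → ℝ be continuous with e^{αy²/2} f(y) bounded by C⟨y⟩³ and ∫ f(y) y^m dy = 0 for m = 0,1,2 (α > 0). Define iterated antiderivatives f^{(-1)}(x) := ∫_{-∞}^x f, f^{(-m-1)}(x) := ∫_{-∞}^x f^{(-m)}. Then for m = 1,2,3 one has f^{(-m)}(y) = -∫_y^∞ f^{(-m+1)}(x)dx and |f^{(-m)}(y)| ≤ C' e^{-αy²/2} ⟨y⟩^{3-m} for all y. -/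
open MeasureTheory Real Filter Set
open scoped Topology

noncomputable def Wg (α : ℝ) (x : ℝ) : ℝ := Real.exp (-(α * x ^ 2 / 2)) * (1 + x ^ 2) ^ (3 : ℕ)

lemma Wg_nonneg (α x : ℝ) : 0 ≤ Wg α x := by
  have h : (0:ℝ) < 1 + x ^ 2 := by positivity
  exact mul_nonneg (Real.exp_nonneg _) (pow_nonneg (by positivity) 3)

lemma Wg_even (α x : ℝ) : Wg α (-x) = Wg α x := by simp [Wg]

lemma intWg {α : ℝ} (hα : 0 < α) : Integrable (Wg α) := by
  have hb : 0 < α / 2 := by linarith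
  have hmono : ∀ n : ℕ, Integrable (fun x : ℝ => x ^ n * Real.exp (-(α/2) * x ^ 2)) := by
    intro n
    have := integrable_rpow_mul_exp_neg_mul_sq hb (s := (n : ℝ)) (lt_of_lt_of_le neg_one_lt_zero (Nat.cast_nonneg n))
    refine this.congr (Eventually.of_forall fun x => ?_)
    norm_cast
  have h2 : Integrable (fun x : ℝ =>
      (x ^ 0 * Real.exp (-(α/2) * x ^ 2) + 3 * (x ^ 2 * Real.exp (-(α/2) * x ^ 2)))
      + (3 * (x ^ 4 * Real.exp (-(α/2) * x ^ 2)) + x ^ 6 * Real.exp (-(α/2) * x ^ 2))) :=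
    (((hmono 0).add ((hmono 2).const_mul 3)).add (((hmono 4).const_mul 3).add (hmono 6)))
  refine h2.congr (Eventually.of_forall fun x => ?_)
  show _ = Wg α x
  unfold Wg
  rw [show -(α * x ^ 2 / 2) = -(α/2) * x ^ 2 by ring]
  ring

lemma Wg_tendsto_top {α : ℝ} (hα : 0 < α) : Tendsto (Wg α) atTop (𝓝 0) := by
  have hb : 0 < α / 2 := by linarith
  have h1 : Tendsto (fun x : ℝ => x ^ (6:ℝ) * Real.exp (-(α/2) * x ^ 2)) atTop (𝓝 0) := by
    refine (rpow_mul_exp_neg_mul_sq_isLittleO_exp_neg hb 6).trans_tendsto ?_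
    have := Real.tendsto_exp_neg_atTop_nhds_zero.comp
      (tendsto_id.const_mul_atTop (show (0:ℝ) < 1/2 by norm_num))
    simpa [Function.comp_def, neg_mul] using this
  have h2 : Tendsto (fun x : ℝ => 8 * (x ^ (6:ℝ) * Real.exp (-(α/2) * x ^ 2))) atTop (𝓝 0) := by
    simpa using h1.const_mul 8
  refine squeeze_zero' (Eventually.of_forall fun x => Wg_nonneg α x) ?_ h2
  filter_upwards [eventually_ge_atTop (1:ℝ)] with x hx
  have hx0 : (0:ℝ) ≤ x := by linarith
  have h3 : ((1 + x ^ 2) ^ (3:ℕ) : ℝ) ≤ 8 * x ^ (6:ℝ) := by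
    rw [show ((6:ℝ)) = ((6:ℕ):ℝ) by norm_num, Real.rpow_natCast]
    nlinarith [sq_nonneg x, sq_nonneg (x^2), sq_nonneg (x^3), sq_nonneg (1 - x^2)]
  calc Wg α x ≤ Real.exp (-(α * x ^ 2 / 2)) * (8 * x ^ (6:ℝ)) :=
        mul_le_mul_of_nonneg_left h3 (Real.exp_nonneg _)
    _ = 8 * (x ^ (6:ℝ) * Real.exp (-(α/2) * x ^ 2)) := by
        rw [show -(α * x ^ 2 / 2) = -(α/2) * x ^ 2 by ring]; ring

lemma Wg_tendsto_bot {α : ℝ} (hα : 0 < α) : Tendsto (Wg α) atBot (𝓝 0) := by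
  have := (Wg_tendsto_top hα).comp tendsto_neg_atBot_atTop
  simpa [Function.comp_def, Wg_even] using this

lemma rpow_le_Wpow (x r : ℝ) (hr : r ≤ 3) : (1 + x ^ 2) ^ r ≤ ((1 + x ^ 2) : ℝ) ^ (3:ℕ) := by
  rw [← Real.rpow_natCast (1 + x ^ 2) 3]
  exact Real.rpow_le_rpow_of_exponent_le (by nlinarith [sq_nonneg x]) (by norm_num [hr])

lemma abs_le_rpow_half (x : ℝ) : |x| ≤ (1 + x ^ 2) ^ ((1:ℝ)/2) := by
  rw [← Real.sqrt_eq_rpow, ← Real.sqrt_sq_eq_abs]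
  exact Real.sqrt_le_sqrt (by nlinarith [sq_nonneg x])

lemma base_pos (x : ℝ) : (0:ℝ) < 1 + x ^ 2 := by positivity

lemma integrable_of_gb {α : ℝ} (hα : 0 < α) {g : ℝ → ℝ} (hm : AEStronglyMeasurable g volume)
    {D k : ℝ} (hk : k ≤ 6)
    (hgb : ∀ x, |g x| ≤ D * Real.exp (-(α * x ^ 2 / 2)) * (1 + x ^ 2) ^ (k / 2)) :
    Integrable g := by
  have hD : 0 ≤ D := by
    have h0 := (abs_nonneg (g 0)).trans (hgb 0)
    nlinarith [Real.exp_pos (-(α * (0:ℝ) ^ 2 / 2)), Real.rpow_pos_of_pos (base_pos 0) (k/2),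
      Real.exp_pos (-(α * (0:ℝ) ^ 2 / 2)), mul_pos (Real.exp_pos (-(α * (0:ℝ) ^ 2 / 2)))
        (Real.rpow_pos_of_pos (base_pos 0) (k/2))]
  refine ((intWg hα).const_mul D).mono' hm (Eventually.of_forall fun x => ?_)
  have h1 : (1 + x ^ 2) ^ (k / 2) ≤ ((1 + x ^ 2) : ℝ) ^ (3:ℕ) :=
    rpow_le_Wpow x (k/2) (by linarith)
  calc ‖g x‖ = |g x| := rfl
    _ ≤ D * Real.exp (-(α * x ^ 2 / 2)) * (1 + x ^ 2) ^ (k / 2) := hgb x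
    _ ≤ D * Real.exp (-(α * x ^ 2 / 2)) * ((1 + x ^ 2) : ℝ) ^ (3:ℕ) := by
        exact mul_le_mul_of_nonneg_left h1 (by positivity)
    _ = D * Wg α x := by rw [Wg]; ring

lemma cont_w {α k : ℝ} : Continuous (fun x : ℝ => Real.exp (-(α * x ^ 2 / 2)) * (1 + x ^ 2) ^ (k / 2)) := by
  apply Continuous.mul
  · exact (Continuous.neg (by continuity)).rexp
  · exact (continuous_const.add (continuous_pow 2)).rpow_const
      (fun x => Or.inl (ne_of_gt (base_pos x)))

lemma int_w {α : ℝ} (hα : 0 < α) {k : ℝ} (hk3 : k ≤ 3) :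
    Integrable (fun x : ℝ => Real.exp (-(α * x ^ 2 / 2)) * (1 + x ^ 2) ^ (k / 2)) := by
  refine integrable_of_gb hα cont_w.aestronglyMeasurable (D := 1) (k := k) (by linarith) fun x => ?_
  rw [abs_of_nonneg (by positivity), one_mul]

lemma tail {α : ℝ} (hα : 0 < α) {k : ℝ} (hk1 : 1 ≤ k) (hk3 : k ≤ 3) :
    ∃ B > 0, ∀ y : ℝ, 0 ≤ y →
      (∫ x in Ioi y, Real.exp (-(α * x ^ 2 / 2)) * (1 + x ^ 2) ^ (k / 2))
        ≤ B * (Real.exp (-(α * y ^ 2 / 2)) * (1 + y ^ 2) ^ ((k - 1) / 2)) := by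
  set w : ℝ → ℝ := fun x => Real.exp (-(α * x ^ 2 / 2)) * (1 + x ^ 2) ^ (k / 2) with hw
  have hwc : Continuous w := cont_w
  have hwint : Integrable w := int_w hα hk3
  have hwnn : ∀ x, 0 ≤ w x := fun x => by
    have := base_pos x; positivity
  set x₀ : ℝ := max 1 (Real.sqrt (2 * k / α)) with hx₀
  have hx₀1 : (1:ℝ) ≤ x₀ := le_max_left _ _
  set p : ℝ := (k - 1) / 2 with hp
  set h : ℝ → ℝ := fun x => 4 / α * (Real.exp (-(α * x ^ 2 / 2)) * (1 + x ^ 2) ^ p) with hh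
  set h' : ℝ → ℝ := fun x => 4 / α * (Real.exp (-(α * x ^ 2 / 2)) * (-(α * x)) * (1 + x ^ 2) ^ p
      + Real.exp (-(α * x ^ 2 / 2)) * (p * (1 + x ^ 2) ^ (p - 1) * (2 * x))) with hh'
  have hderiv : ∀ x : ℝ, HasDerivAt h (h' x) x := by
    intro x
    have hbase : HasDerivAt (fun x : ℝ => 1 + x ^ 2) (2 * x) x := by
      simpa using (hasDerivAt_pow 2 x).const_add 1
    have hexp : HasDerivAt (fun x : ℝ => Real.exp (-(α * x ^ 2 / 2)))
        (Real.exp (-(α * x ^ 2 / 2)) * (-(α * x))) x := by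
      have hinner : HasDerivAt (fun x : ℝ => -(α * x ^ 2 / 2)) (-(α * x)) x := by
        have := ((hasDerivAt_pow 2 x).const_mul α).div_const 2
        convert this.neg using 1
        all_goals first | rfl | ring
      simpa [mul_comm] using hinner.exp
    have hr : HasDerivAt (fun x : ℝ => ((1:ℝ) + x ^ 2) ^ p)
        (p * (1 + x ^ 2) ^ (p - 1) * (2 * x)) x := by
      have := hbase.rpow_const (p := p) (Or.inl (ne_of_gt (base_pos x)))
      convert this using 1; ring
    exact ((hexp.mul hr).const_mul (4 / α))
  have hnonneg_h : ∀ x, 0 ≤ h x := fun x => by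
    have h1 : (0:ℝ) < (1 + x ^ 2) ^ p := Real.rpow_pos_of_pos (base_pos x) p
    have : (0:ℝ) < 4 / α := by positivity
    positivity
  have htend : Tendsto h atTop (𝓝 0) := by
    refine squeeze_zero' (Eventually.of_forall hnonneg_h) (Eventually.of_forall fun x => ?_)
      (by simpa using (Wg_tendsto_top hα).const_mul (4/α))
    have h1 : (1 + x ^ 2) ^ p ≤ ((1 + x ^ 2) : ℝ) ^ (3:ℕ) := rpow_le_Wpow x p (by rw [hp]; linarith)
    have h2 : Real.exp (-(α * x ^ 2 / 2)) * (1 + x ^ 2) ^ p ≤ Wg α x := by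
      rw [Wg]; exact mul_le_mul_of_nonneg_left h1 (Real.exp_nonneg _)
    calc h x ≤ 4 / α * Wg α x := by
          refine mul_le_mul_of_nonneg_left h2 (by positivity)
      _ = 4 / α * Wg α x := rfl
  -- pointwise inequality for x ≥ x₀
  have hpoint : ∀ x : ℝ, x₀ ≤ x → w x ≤ -h' x := by
    intro x hx
    have hx1 : (1:ℝ) ≤ x := le_trans hx₀1 hx
    have hx0 : (0:ℝ) < x := by linarith
    have hE : (0:ℝ) < Real.exp (-(α * x ^ 2 / 2)) := Real.exp_pos _
    have hA : (0:ℝ) < (1 + x ^ 2) ^ (p - 1) := Real.rpow_pos_of_pos (base_pos x) _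
    have hxsq : 2 * k / α ≤ x ^ 2 := by
      have h1 : Real.sqrt (2 * k / α) ≤ x := le_trans (le_max_right _ _) hx
      have h2 : Real.sqrt (2 * k / α) ^ 2 = 2 * k / α :=
        Real.sq_sqrt (by positivity)
      nlinarith [Real.sqrt_nonneg (2 * k / α)]
    have hfac : 0 ≤ α * (1 + x ^ 2) - 2 * (k - 1) := by
      rw [div_le_iff₀ hα] at hxsq
      nlinarith
    set A : ℝ := (1 + x ^ 2) ^ (p - 1) with hA'
    have hsplitp : (1 + x ^ 2) ^ p = A * (1 + x ^ 2) := by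
      rw [hA', ← Real.rpow_add_one (ne_of_gt (base_pos x)) (p - 1)]
      congr 1; ring
    have hsplitk : (1 + x ^ 2) ^ (k / 2) = A * ((1 + x ^ 2) * (1 + x ^ 2) ^ ((1:ℝ)/2)) := by
      have e1 : ((1:ℝ) + x ^ 2) ^ (k / 2) = (1 + x ^ 2) ^ ((p - 1) + (3/2 : ℝ)) := by
        congr 1; rw [hp]; ring
      have e2 : ((1:ℝ) + x ^ 2) ^ ((3:ℝ)/2) = (1 + x ^ 2) * (1 + x ^ 2) ^ ((1:ℝ)/2) := by
        rw [show ((3:ℝ)/2) = 1 + 1/2 by norm_num, Real.rpow_add (base_pos x), Real.rpow_one]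
      rw [e1, Real.rpow_add (base_pos x), e2, hA']
    have hhalf : (1 + x ^ 2) ^ ((1:ℝ)/2) ≤ 2 * x := by
      rw [← Real.sqrt_eq_rpow]
      have : Real.sqrt (1 + x ^ 2) ≤ Real.sqrt ((2*x) ^ 2) := Real.sqrt_le_sqrt (by nlinarith)
      rwa [Real.sqrt_sq (by linarith)] at this
    have hhalfpos : (0:ℝ) < (1 + x ^ 2) ^ ((1:ℝ)/2) := Real.rpow_pos_of_pos (base_pos x) _
    have hgoal : Real.exp (-(α * x ^ 2 / 2)) * (A * ((1 + x ^ 2) * (1 + x ^ 2) ^ ((1:ℝ)/2)))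
        ≤ -h' x := by
      have hexpand : -h' x = 4 / α * (Real.exp (-(α * x ^ 2 / 2)) * (A * (x * (α * (1 + x ^ 2) - (k - 1))))) := by
        rw [hh']
        simp only [hsplitp]
        rw [hp]
        ring
      rw [hexpand, div_mul_eq_mul_div, le_div_iff₀ hα]
      nlinarith [mul_pos hE hA, mul_pos (mul_pos hE hA) hx0,
        mul_nonneg (mul_nonneg (mul_nonneg hE.le hA.le) hx0.le) hfac,
        mul_le_mul_of_nonneg_left hhalf (mul_nonneg (mul_nonneg hE.le hA.le) (le_of_lt (base_pos x)))]
    calc w x = Real.exp (-(α * x ^ 2 / 2)) * (A * ((1 + x ^ 2) * (1 + x ^ 2) ^ ((1:ℝ)/2))) := by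
          rw [hw]; simp only []; rw [hsplitk]
      _ ≤ -h' x := hgoal
  -- integral bound for y ≥ x₀
  have hbig : ∀ y, x₀ ≤ y → (∫ x in Ioi y, w x) ≤ h y := by
    intro y hy
    have hderiv' : ∀ x ∈ Ici y, HasDerivAt (fun x => -h x) (-h' x) x := fun x _ => (hderiv x).neg
    have hpos : ∀ x ∈ Ioi y, 0 ≤ -h' x := fun x hx =>
      le_trans (hwnn x) (hpoint x (le_trans hy (le_of_lt hx)))
    have htend' : Tendsto (fun x => -h x) atTop (𝓝 0) := by
      simpa using htend.neg
    have hint : IntegrableOn (fun x => -h' x) (Ioi y) :=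
      integrableOn_Ioi_deriv_of_nonneg' hderiv' hpos htend'
    have heq : (∫ x in Ioi y, -h' x) = 0 - (-h y) :=
      integral_Ioi_of_hasDerivAt_of_nonneg' hderiv' hpos htend'
    have hmono := setIntegral_mono_on hwint.integrableOn hint measurableSet_Ioi
      (fun x hx => hpoint x (le_trans hy (le_of_lt hx)))
    rw [heq] at hmono
    simpa using hmono
  set Iw : ℝ := ∫ x, w x with hIw
  have hIw0 : 0 ≤ Iw := integral_nonneg hwnn
  set B : ℝ := max (4/α) ((Iw + 1) * Real.exp (α * x₀ ^ 2 / 2)) with hB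
  have hBpos : 0 < B := lt_of_lt_of_le (by positivity) (le_max_left _ _)
  refine ⟨B, hBpos, fun y hy0 => ?_⟩
  have hrpow_nonneg : (0:ℝ) ≤ Real.exp (-(α * y ^ 2 / 2)) * (1 + y ^ 2) ^ ((k - 1) / 2) := by
    have := Real.rpow_pos_of_pos (base_pos y) ((k-1)/2)
    positivity
  by_cases hcase : x₀ ≤ y
  · calc (∫ x in Ioi y, w x) ≤ h y := hbig y hcase
      _ = 4/α * (Real.exp (-(α * y ^ 2 / 2)) * (1 + y ^ 2) ^ ((k - 1) / 2)) := by rw [hh]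
      _ ≤ B * (Real.exp (-(α * y ^ 2 / 2)) * (1 + y ^ 2) ^ ((k - 1) / 2)) :=
          mul_le_mul_of_nonneg_right (le_max_left _ _) hrpow_nonneg
  · push_neg at hcase
    have haux : (0:ℝ) ≤ α * ((x₀ - y) * (x₀ + y)) :=
      mul_nonneg hα.le (mul_nonneg (by linarith) (by linarith))
    have h1 : Real.exp (-(α * x₀ ^ 2 / 2)) ≤ Real.exp (-(α * y ^ 2 / 2)) :=
      Real.exp_le_exp.2 (by nlinarith [haux])
    have h2 : (1:ℝ) ≤ (1 + y ^ 2) ^ ((k - 1) / 2) := by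
      have := Real.rpow_le_rpow_of_exponent_le (show (1:ℝ) ≤ 1 + y ^ 2 by nlinarith)
        (show (0:ℝ) ≤ (k - 1)/2 by linarith)
      rwa [Real.rpow_zero] at this
    have hprod : Real.exp (α * x₀ ^ 2 / 2) * Real.exp (-(α * x₀ ^ 2 / 2)) = 1 := by
      rw [← Real.exp_add]; norm_num
    have h4 : Real.exp (-(α * x₀ ^ 2 / 2)) * 1 ≤
        Real.exp (-(α * y ^ 2 / 2)) * (1 + y ^ 2) ^ ((k - 1) / 2) :=
      mul_le_mul h1 h2 zero_le_one (Real.exp_nonneg _)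
    have h5 := mul_le_mul_of_nonneg_left h4
      (show (0:ℝ) ≤ (Iw + 1) * Real.exp (α * x₀ ^ 2 / 2) by positivity)
    have h6 : (Iw + 1) * Real.exp (α * x₀ ^ 2 / 2) * (Real.exp (-(α * x₀ ^ 2 / 2)) * 1) = Iw + 1 := by
      rw [mul_one, mul_assoc, hprod, mul_one]
    rw [h6] at h5
    have h7 : (∫ x in Ioi y, w x) ≤ Iw :=
      setIntegral_le_integral hwint (Eventually.of_forall hwnn)
    calc (∫ x in Ioi y, w x) ≤ Iw := h7
      _ ≤ Iw + 1 := by linarith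
      _ ≤ (Iw + 1) * Real.exp (α * x₀ ^ 2 / 2) *
            (Real.exp (-(α * y ^ 2 / 2)) * (1 + y ^ 2) ^ ((k - 1) / 2)) := h5
      _ ≤ B * (Real.exp (-(α * y ^ 2 / 2)) * (1 + y ^ 2) ^ ((k - 1) / 2)) :=
          mul_le_mul_of_nonneg_right (le_max_right _ _) hrpow_nonneg

lemma hasDerivAt_primitive {g : ℝ → ℝ} (hg : Continuous g) (hgi : Integrable g) (y : ℝ) :
    HasDerivAt (fun t => ∫ x in Iic t, g x) (g y) y := by
  have heq : ∀ t : ℝ, (∫ x in Iic t, g x) = (∫ x in (0:ℝ)..t, g x) + ∫ x in Iic 0, g x := by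
    intro t
    have := intervalIntegral.integral_Iic_sub_Iic (hgi.integrableOn (s := Iic 0)) (hgi.integrableOn (s := Iic t))
    linarith
  rw [show (fun t => ∫ x in Iic t, g x) = fun t => (∫ x in (0:ℝ)..t, g x) + ∫ x in Iic 0, g x from
    funext heq]
  exact (intervalIntegral.integral_hasDerivAt_right (hgi.intervalIntegrable)
    (hg.stronglyMeasurableAtFilter _ _) hg.continuousAt).add_const _

lemma cont_primitive {g : ℝ → ℝ} (hg : Continuous g) (hgi : Integrable g) :
    Continuous (fun t => ∫ x in Iic t, g x) :=
  continuous_iff_continuousAt.2 fun y => (hasDerivAt_primitive hg hgi y).continuousAt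

lemma twosided {g : ℝ → ℝ} (hgi : Integrable g) (hmean : (∫ x, g x) = 0) (y : ℝ) :
    (∫ x in Iic y, g x) = -∫ x in Ici y, g x := by
  have h1 : (∫ x in Iio y, g x) + (∫ x in Ici y, g x) = ∫ x, g x :=
    intervalIntegral.integral_Iio_add_Ici hgi.integrableOn hgi.integrableOn
  rw [hmean] at h1
  rw [integral_Iic_eq_integral_Iio]
  linarith

lemma primitive_bound {α : ℝ} (hα : 0 < α) {k : ℝ} (hk1 : 1 ≤ k) (hk3 : k ≤ 3)
    {g : ℝ → ℝ} (hg : Continuous g) {D : ℝ} (hD : 0 ≤ D)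
    (hgb : ∀ x, |g x| ≤ D * Real.exp (-(α * x ^ 2 / 2)) * (1 + x ^ 2) ^ (k / 2))
    (hmean : (∫ x, g x) = 0) :
    ∃ D' > 0, ∀ y, |∫ x in Iic y, g x|
      ≤ D' * Real.exp (-(α * y ^ 2 / 2)) * (1 + y ^ 2) ^ ((k - 1) / 2) := by
  obtain ⟨B, hB, htail⟩ := tail hα hk1 hk3
  have hgi : Integrable g := integrable_of_gb hα hg.aestronglyMeasurable (by linarith) hgb
  set w : ℝ → ℝ := fun x => Real.exp (-(α * x ^ 2 / 2)) * (1 + x ^ 2) ^ (k / 2) with hw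
  have hwint : Integrable w := int_w hα hk3
  have hwe : ∀ x : ℝ, w (-x) = w x := fun x => by simp [hw]
  have habs : ∀ s : Set ℝ, MeasurableSet s → (∫ x in s, |g x|) ≤ D * ∫ x in s, w x := by
    intro s hs
    rw [← integral_const_mul]
    exact setIntegral_mono_on hgi.abs.integrableOn ((hwint.const_mul D).integrableOn) hs
      (fun x _ => by simpa [hw, mul_assoc] using hgb x)
  refine ⟨D * B + 1, by positivity, fun y => ?_⟩
  have hrnn : (0:ℝ) ≤ Real.exp (-(α * y ^ 2 / 2)) * (1 + y ^ 2) ^ ((k - 1) / 2) := by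
    have := Real.rpow_pos_of_pos (base_pos y) ((k - 1)/2); positivity
  rcases le_or_gt 0 y with hy | hy
  · rw [twosided hgi hmean y, abs_neg]
    calc |∫ x in Ici y, g x| ≤ ∫ x in Ici y, |g x| := by
          simpa using norm_integral_le_integral_norm (μ := volume.restrict (Ici y)) g
      _ ≤ D * ∫ x in Ici y, w x := habs _ measurableSet_Ici
      _ = D * ∫ x in Ioi y, w x := by rw [integral_Ici_eq_integral_Ioi]
      _ ≤ D * (B * (Real.exp (-(α * y ^ 2 / 2)) * (1 + y ^ 2) ^ ((k - 1) / 2))) :=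
          mul_le_mul_of_nonneg_left (htail y hy) hD
      _ ≤ (D * B + 1) * Real.exp (-(α * y ^ 2 / 2)) * (1 + y ^ 2) ^ ((k - 1) / 2) := by
          nlinarith [hrnn]
  · have hflip : (∫ x in Iic y, w x) = ∫ x in Ioi (-y), w x := by
      have h0 := integral_comp_neg_Iic y w
      simp only [hwe] at h0
      rw [h0]
    calc |∫ x in Iic y, g x| ≤ ∫ x in Iic y, |g x| := by
          simpa using norm_integral_le_integral_norm (μ := volume.restrict (Iic y)) g
      _ ≤ D * ∫ x in Iic y, w x := habs _ measurableSet_Iic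
      _ = D * ∫ x in Ioi (-y), w x := by rw [hflip]
      _ ≤ D * (B * (Real.exp (-(α * (-y) ^ 2 / 2)) * (1 + (-y) ^ 2) ^ ((k - 1) / 2))) :=
          mul_le_mul_of_nonneg_left (htail (-y) (by linarith)) hD
      _ = D * (B * (Real.exp (-(α * y ^ 2 / 2)) * (1 + y ^ 2) ^ ((k - 1) / 2))) := by
          rw [show ((-y):ℝ) ^ 2 = y ^ 2 by ring]
      _ ≤ (D * B + 1) * Real.exp (-(α * y ^ 2 / 2)) * (1 + y ^ 2) ^ ((k - 1) / 2) := by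
          nlinarith [hrnn]

lemma gb_mul_abs {α : ℝ} {u : ℝ → ℝ} {c r : ℝ}
    (hu : ∀ x, |u x| ≤ c * Real.exp (-(α * x ^ 2 / 2)) * (1 + x ^ 2) ^ (r / 2)) (x : ℝ) :
    |x * u x| ≤ c * Real.exp (-(α * x ^ 2 / 2)) * (1 + x ^ 2) ^ ((r + 1) / 2) := by
  have h2 : |x| * |u x| ≤ (1 + x ^ 2) ^ ((1:ℝ)/2) *
      (c * Real.exp (-(α * x ^ 2 / 2)) * (1 + x ^ 2) ^ (r / 2)) :=
    mul_le_mul (abs_le_rpow_half x) (hu x) (abs_nonneg _)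
      (le_of_lt (Real.rpow_pos_of_pos (base_pos x) _))
  rw [abs_mul]
  refine le_trans h2 (le_of_eq ?_)
  rw [show c * Real.exp (-(α * x ^ 2 / 2)) * (1 + x ^ 2) ^ ((r + 1) / 2)
      = c * Real.exp (-(α * x ^ 2 / 2)) * ((1 + x ^ 2) ^ ((1:ℝ)/2) * (1 + x ^ 2) ^ (r / 2)) by
    rw [← Real.rpow_add (base_pos x)]; congr 2; ring]
  ring

lemma gb_mul_sqhalf {α : ℝ} {u : ℝ → ℝ} {c r : ℝ}
    (hu : ∀ x, |u x| ≤ c * Real.exp (-(α * x ^ 2 / 2)) * (1 + x ^ 2) ^ (r / 2)) (x : ℝ) :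
    |x ^ 2 / 2 * u x| ≤ c * Real.exp (-(α * x ^ 2 / 2)) * (1 + x ^ 2) ^ ((r + 2) / 2) := by
  have h1 : |x ^ 2 / 2| ≤ ((1:ℝ) + x ^ 2) ^ ((2:ℝ)/2) := by
    rw [abs_of_nonneg (by positivity), show ((2:ℝ)/2) = 1 by norm_num, Real.rpow_one]
    nlinarith [sq_nonneg x]
  have h2 : |x ^ 2 / 2| * |u x| ≤ (1 + x ^ 2) ^ ((2:ℝ)/2) *
      (c * Real.exp (-(α * x ^ 2 / 2)) * (1 + x ^ 2) ^ (r / 2)) :=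
    mul_le_mul h1 (hu x) (abs_nonneg _) (le_of_lt (Real.rpow_pos_of_pos (base_pos x) _))
  rw [abs_mul]
  refine le_trans h2 (le_of_eq ?_)
  rw [show c * Real.exp (-(α * x ^ 2 / 2)) * (1 + x ^ 2) ^ ((r + 2) / 2)
      = c * Real.exp (-(α * x ^ 2 / 2)) * ((1 + x ^ 2) ^ ((2:ℝ)/2) * (1 + x ^ 2) ^ (r / 2)) by
    rw [← Real.rpow_add (base_pos x)]; congr 2; ring]
  ring

lemma gb_le_Wg {α : ℝ} {u : ℝ → ℝ} {c r : ℝ} (hc : 0 ≤ c) (hr : r ≤ 6)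
    (hu : ∀ x, |u x| ≤ c * Real.exp (-(α * x ^ 2 / 2)) * (1 + x ^ 2) ^ (r / 2)) (x : ℝ) :
    ‖u x‖ ≤ c * Wg α x := by
  have h1 : (1 + x ^ 2) ^ (r / 2) ≤ ((1 + x ^ 2) : ℝ) ^ (3:ℕ) := rpow_le_Wpow x (r/2) (by linarith)
  calc ‖u x‖ = |u x| := rfl
    _ ≤ c * Real.exp (-(α * x ^ 2 / 2)) * (1 + x ^ 2) ^ (r / 2) := hu x
    _ ≤ c * Real.exp (-(α * x ^ 2 / 2)) * ((1 + x ^ 2) : ℝ) ^ (3:ℕ) :=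
        mul_le_mul_of_nonneg_left h1 (by positivity)
    _ = c * Wg α x := by rw [Wg]; ring

lemma moment_transfer {α : ℝ} (hα : 0 < α) {k : ℝ} (hk1 : 1 ≤ k) (hk3 : k ≤ 3)
    {g : ℝ → ℝ} (hg : Continuous g) {D : ℝ} (hD : 0 ≤ D)
    (hgb : ∀ x, |g x| ≤ D * Real.exp (-(α * x ^ 2 / 2)) * (1 + x ^ 2) ^ (k / 2))
    (hmean : (∫ x, g x) = 0) :
    (∫ y, (∫ x in Iic y, g x)) = -∫ y, y * g y ∧
    (∫ y, y * (∫ x in Iic y, g x)) = -∫ y, y ^ 2 / 2 * g y := by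
  have hgi : Integrable g := integrable_of_gb hα hg.aestronglyMeasurable (by linarith) hgb
  set G : ℝ → ℝ := fun y => ∫ x in Iic y, g x with hG
  have hGc : Continuous G := cont_primitive hg hgi
  have hGd : ∀ y, HasDerivAt G (g y) y := hasDerivAt_primitive hg hgi
  obtain ⟨D', hD'pos, hGb⟩ := primitive_bound hα hk1 hk3 hg hD hgb hmean
  have hD'0 : (0:ℝ) ≤ D' := le_of_lt hD'pos
  have hGint : Integrable G :=
    integrable_of_gb hα hGc.aestronglyMeasurable (k := k - 1) (by linarith)
      (by simpa using hGb)
  have hygb := gb_mul_abs hgb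
  have hygi : Integrable (fun y => y * g y) :=
    integrable_of_gb hα (continuous_id.mul hg).aestronglyMeasurable (k := k + 1)
      (by linarith) hygb
  have hyGb : ∀ x, |x * G x| ≤ D' * Real.exp (-(α * x ^ 2 / 2)) * (1 + x ^ 2) ^ ((k - 1 + 1) / 2) :=
    gb_mul_abs (fun x => by simpa using hGb x)
  have hyGi : Integrable (fun y => y * G y) :=
    integrable_of_gb hα (continuous_id.mul hGc).aestronglyMeasurable (k := k - 1 + 1)
      (by linarith) hyGb
  have hy2gb := gb_mul_sqhalf hgb
  have hy2gi : Integrable (fun y => y ^ 2 / 2 * g y) :=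
    integrable_of_gb hα (((continuous_pow 2).div_const 2).mul hg).aestronglyMeasurable
      (k := k + 2) (by linarith) hy2gb
  have hWtop : Tendsto (fun x => D' * Wg α x) atTop (𝓝 0) := by
    simpa using (Wg_tendsto_top hα).const_mul D'
  have hWbot : Tendsto (fun x => D' * Wg α x) atBot (𝓝 0) := by
    simpa using (Wg_tendsto_bot hα).const_mul D'
  constructor
  · have hH : ∀ y, HasDerivAt (fun y => y * G y) (G y + y * g y) y := by
      intro y
      have : HasDerivAt (fun y => y * G y) (1 * G y + y * g y) y := (hasDerivAt_id y).mul (hGd y)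
      simpa [add_comm] using this
    have hnorm : ∀ y, ‖y * G y‖ ≤ D' * Wg α y :=
      gb_le_Wg (r := k - 1 + 1) hD'0 (by linarith) hyGb
    have htop : Tendsto (fun y => y * G y) atTop (𝓝 0) := squeeze_zero_norm hnorm hWtop
    have hbot : Tendsto (fun y => y * G y) atBot (𝓝 0) := squeeze_zero_norm hnorm hWbot
    have h0 : (∫ y, (G y + y * g y)) = 0 - 0 :=
      integral_of_hasDerivAt_of_tendsto hH (hGint.add hygi) hbot htop
    rw [integral_add hGint hygi] at h0
    have := h0
    linarith [this]
  · have hH : ∀ y, HasDerivAt (fun y => y ^ 2 / 2 * G y) (y * G y + y ^ 2 / 2 * g y) y := by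
      intro y
      have := ((hasDerivAt_pow 2 y).div_const 2).mul (hGd y)
      convert this using 1
      push_cast
      all_goals first | rfl | ring
    have hnorm : ∀ y, ‖y ^ 2 / 2 * G y‖ ≤ D' * Wg α y :=
      gb_le_Wg (r := k - 1 + 2) hD'0 (by linarith) (gb_mul_sqhalf (fun x => by simpa using hGb x))
    have htop : Tendsto (fun y => y ^ 2 / 2 * G y) atTop (𝓝 0) := squeeze_zero_norm hnorm hWtop
    have hbot : Tendsto (fun y => y ^ 2 / 2 * G y) atBot (𝓝 0) := squeeze_zero_norm hnorm hWbot
    have h0 : (∫ y, (y * G y + y ^ 2 / 2 * g y)) = 0 - 0 :=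
      integral_of_hasDerivAt_of_tendsto hH (hyGi.add hy2gi) hbot htop
    rw [integral_add hyGi hy2gi] at h0
    linarith [h0]



open MeasureTheory

/-- If `f` has Gaussian decay `|f(y)| ≤ C e^{-αy²/2}⟨y⟩³` and vanishing moments
`∫ f y^m = 0` for `m = 0,1,2`, then its iterated antiderivatives
`f^{(-m)}`, `m = 1,2,3`, have the two-sided representation
`f^{(-m)}(y) = -∫_y^∞ f^{(-m+1)}` and satisfy
`|f^{(-m)}(y)| ≤ C' e^{-αy²/2}⟨y⟩^{3-m}`. -/
theorem stmt17 (α : ℝ) (hα : 0 < α) (f : ℝ → ℝ) (hf : Continuous f)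
    (C : ℝ) (hC : 0 ≤ C)
    (hbound : ∀ y, |f y| ≤ C * Real.exp (-(α * y ^ 2 / 2)) * (1 + y ^ 2) ^ ((3 : ℝ) / 2))
    (hmom : ∀ m : ℕ, m ≤ 2 → ∫ y : ℝ, f y * y ^ m = 0)
    (F : ℕ → ℝ → ℝ) (hF0 : F 0 = f)
    (hFrec : ∀ m y, F (m + 1) y = ∫ x in Set.Iic y, F m x) :
    ∀ m : ℕ, 1 ≤ m → m ≤ 3 →
      (∀ y, F m y = -∫ x in Set.Ici y, F (m - 1) x) ∧
      ∃ C' > 0, ∀ y, |F m y|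
        ≤ C' * Real.exp (-(α * y ^ 2 / 2)) * (1 + y ^ 2) ^ (((3 : ℝ) - m) / 2) := by
  have hb3 : ∀ x, |f x| ≤ C * Real.exp (-(α * x ^ 2 / 2)) * (1 + x ^ 2) ^ ((3:ℝ) / 2) := hbound
  have hmean0 : (∫ y : ℝ, f y) = 0 := by simpa using hmom 0 (by norm_num)
  have hfi : Integrable f :=
    integrable_of_gb hα hf.aestronglyMeasurable (k := 3) (by norm_num) hb3
  -- level 1
  have hF1 : F 1 = fun y => ∫ x in Iic y, f x := by
    funext y; rw [hFrec 0 y, hF0]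
  have hG1c : Continuous (fun y => ∫ x in Iic y, f x) := cont_primitive hf hfi
  obtain ⟨D1, hD1pos, hG1b⟩ :=
    primitive_bound hα (k := 3) (by norm_num) (by norm_num) hf hC hb3 hmean0
  obtain ⟨hm1a, hm1b⟩ := moment_transfer hα (k := 3) (by norm_num) (by norm_num) hf hC hb3 hmean0
  have hyf : (∫ y : ℝ, y * f y) = 0 := by
    have h1 := hmom 1 (by norm_num)
    simp only [pow_one] at h1
    rw [← h1]
    congr 1; funext y; ring
  have hy2f : (∫ y : ℝ, y ^ 2 / 2 * f y) = 0 := by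
    have h2 := hmom 2 (by norm_num)
    have he : (fun y : ℝ => y ^ 2 / 2 * f y) = fun y => (1/2) * (f y * y ^ 2) := by
      funext y; ring
    rw [he, integral_const_mul, h2, mul_zero]
  have hmean1 : (∫ y : ℝ, ∫ x in Iic y, f x) = 0 := by rw [hm1a, hyf, neg_zero]
  have hmeanyG1 : (∫ y : ℝ, y * ∫ x in Iic y, f x) = 0 := by rw [hm1b, hy2f, neg_zero]
  have hG1b2 : ∀ y, |∫ x in Iic y, f x|
      ≤ D1 * Real.exp (-(α * y ^ 2 / 2)) * (1 + y ^ 2) ^ ((2:ℝ) / 2) := by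
    intro y
    rw [show ((2:ℝ)/2) = ((3:ℝ) - 1)/2 by norm_num]
    exact hG1b y
  have hG1i : Integrable (fun y => ∫ x in Iic y, f x) :=
    integrable_of_gb hα hG1c.aestronglyMeasurable (k := 2) (by norm_num) hG1b2
  -- level 2
  have hF2 : F 2 = fun y => ∫ t in Iic y, ∫ x in Iic t, f x := by
    funext y; rw [hFrec 1 y]
    refine setIntegral_congr_fun measurableSet_Iic fun t _ => ?_
    rw [hF1]
  have hG2c : Continuous (fun y => ∫ t in Iic y, ∫ x in Iic t, f x) := cont_primitive hG1c hG1i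
  obtain ⟨D2, hD2pos, hG2b⟩ :=
    primitive_bound hα (k := 2) (by norm_num) (by norm_num) hG1c hD1pos.le hG1b2 hmean1
  obtain ⟨hm2a, _⟩ :=
    moment_transfer hα (k := 2) (by norm_num) (by norm_num) hG1c hD1pos.le hG1b2 hmean1
  have hmean2 : (∫ y : ℝ, ∫ t in Iic y, ∫ x in Iic t, f x) = 0 := by
    rw [hm2a, hmeanyG1, neg_zero]
  have hG2b1 : ∀ y, |∫ t in Iic y, ∫ x in Iic t, f x|
      ≤ D2 * Real.exp (-(α * y ^ 2 / 2)) * (1 + y ^ 2) ^ ((1:ℝ) / 2) := by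
    intro y
    rw [show ((1:ℝ)/2) = ((2:ℝ) - 1)/2 by norm_num]
    exact hG2b y
  have hG2i : Integrable (fun y => ∫ t in Iic y, ∫ x in Iic t, f x) :=
    integrable_of_gb hα hG2c.aestronglyMeasurable (k := 1) (by norm_num) hG2b1
  -- level 3
  have hF3 : F 3 = fun y => ∫ s in Iic y, ∫ t in Iic s, ∫ x in Iic t, f x := by
    funext y; rw [hFrec 2 y]
    refine setIntegral_congr_fun measurableSet_Iic fun t _ => ?_
    rw [hF2]
  obtain ⟨D3, hD3pos, hG3b⟩ :=
    primitive_bound hα (k := 1) (by norm_num) (by norm_num) hG2c hD2pos.le hG2b1 hmean2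
  -- conclude
  intro m hm1 hm3
  interval_cases m
  · constructor
    · intro y
      have h2s := twosided hfi hmean0 y
      rw [show (1:ℕ) - 1 = 0 from rfl, hF1, hF0]
      exact h2s
    · refine ⟨D1, hD1pos, fun y => ?_⟩
      rw [hF1, show ((3:ℝ) - ((1:ℕ):ℝ))/2 = ((3:ℝ) - 1)/2 by norm_num]
      exact hG1b y
  · constructor
    · intro y
      have h2s := twosided hG1i hmean1 y
      rw [show (2:ℕ) - 1 = 1 from rfl, hF2, hF1]
      exact h2s
    · refine ⟨D2, hD2pos, fun y => ?_⟩
      rw [hF2, show ((3:ℝ) - ((2:ℕ):ℝ))/2 = ((2:ℝ) - 1)/2 by norm_num]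
      exact hG2b y
  · constructor
    · intro y
      have h2s := twosided hG2i hmean2 y
      rw [show (3:ℕ) - 1 = 2 from rfl, hF3, hF2]
      exact h2s
    · refine ⟨D3, hD3pos, fun y => ?_⟩
      rw [hF3, show ((3:ℝ) - ((3:ℕ):ℝ))/2 = ((1:ℝ) - 1)/2 by norm_num]
      exact hG3b y
end

section
/- Let a(τ) be continuous on [0,T] with |a(τ) - α| ≤ 2β(τ) and a(τ) ≥ 1/4, where β(τ) ≤ β(0) ≪ 1 is decreasing, and let μ(τ) = λ(t(τ))/λ₁(t(τ)) satisfy μ(T) = 1 and the integral equation μ(τ) - 1 = -∫_τ^T e^{-∫_τ^σ 2a(ρ)dρ} Γ(σ)dσ with |Γ| ≤ C(β + (1 + μ^{-1})(μ-1)² + β|μ-1|). Then |μ(τ) - 1| ≤ C' β(τ) for all τ ∈ [0,T], provided β(0) is small enough. -/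
open Set intervalIntegral MeasureTheory

/-- Main integral estimate: if `|Γ| ≤ (3C/2)β` on `[τ,T]`, `a ≥ 1/4`, then
`|μ τ - 1| ≤ 3Cβ(τ)`. -/
lemma est18 (C T : ℝ) (hC : 0 < C) (a β μ Γ : ℝ → ℝ)
    (ha : ContinuousOn a (Set.Icc 0 T)) (hΓc : ContinuousOn Γ (Set.Icc 0 T))
    (hβanti : AntitoneOn β (Set.Icc 0 T))
    (hβpos : ∀ τ ∈ Set.Icc (0:ℝ) T, 0 < β τ)
    (ha4 : ∀ σ ∈ Set.Icc (0:ℝ) T, 1/4 ≤ a σ)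
    (τ : ℝ) (hτ : τ ∈ Set.Icc (0:ℝ) T)
    (heq : μ τ - 1 = -∫ σ in τ..T, Real.exp (-∫ ρ in τ..σ, 2 * a ρ) * Γ σ)
    (hΓb : ∀ σ ∈ Set.Icc τ T, |Γ σ| ≤ (3*C/2) * β σ) :
    |μ τ - 1| ≤ 3 * C * β τ := by
  obtain ⟨hτ0, hτT⟩ := hτ
  have hsub : Set.Icc τ T ⊆ Set.Icc 0 T := Set.Icc_subset_Icc hτ0 le_rfl
  -- integrability of 2*a on Icc τ T
  have ha2 : ContinuousOn (fun ρ => 2 * a ρ) (Set.Icc τ T) :=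
    (continuousOn_const.mul (ha.mono hsub))
  have ha2int : IntegrableOn (fun ρ => 2 * a ρ) (Set.Icc τ T) :=
    ha2.integrableOn_compact isCompact_Icc
  -- continuity of the primitive
  have hprim : ContinuousOn (fun σ => ∫ ρ in τ..σ, 2 * a ρ) (Set.Icc τ T) := by
    have := continuousOn_primitive_interval (a := τ) (b := T)
      (f := fun ρ => 2 * a ρ) (μ := volume) (by rwa [Set.uIcc_of_le hτT])
    rwa [Set.uIcc_of_le hτT] at this
  have hkc : ContinuousOn (fun σ => Real.exp (-∫ ρ in τ..σ, 2 * a ρ) * Γ σ)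
      (Set.Icc τ T) :=
    ((hprim.neg.rexp)).mul (hΓc.mono hsub)
  have hfint : IntervalIntegrable (fun σ => Real.exp (-∫ ρ in τ..σ, 2 * a ρ) * Γ σ)
      volume τ T := hkc.intervalIntegrable_of_Icc hτT
  -- the dominating function
  set g : ℝ → ℝ := fun σ => (3*C/2) * β τ * Real.exp ((τ - σ)/2) with hg
  have hgc : Continuous g := by continuity
  have hgint : IntervalIntegrable g volume τ T := hgc.intervalIntegrable τ T
  -- pointwise bound
  have hpt : ∀ σ ∈ Set.Icc τ T,
      |Real.exp (-∫ ρ in τ..σ, 2 * a ρ) * Γ σ| ≤ g σ := by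
    intro σ hσ
    have hτσ : τ ≤ σ := hσ.1
    have hintlb : (σ - τ) * (1/2) ≤ ∫ ρ in τ..σ, 2 * a ρ := by
      have h1 : ∫ ρ in τ..σ, (1/2 : ℝ) = (σ - τ) * (1/2) := by
        simp [intervalIntegral.integral_const, smul_eq_mul]
      rw [← h1]
      apply intervalIntegral.integral_mono_on hτσ
        (intervalIntegrable_const)
        ((ha2.mono (Set.Icc_subset_Icc le_rfl hσ.2)).intervalIntegrable_of_Icc hτσ)
      intro x hx
      have := ha4 x (hsub ⟨hx.1, le_trans hx.2 hσ.2⟩)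
      linarith
    have hexp : Real.exp (-∫ ρ in τ..σ, 2 * a ρ) ≤ Real.exp ((τ - σ)/2) := by
      apply Real.exp_le_exp.2; linarith
    have hΓ := hΓb σ hσ
    have hββ : β σ ≤ β τ := hβanti ⟨hτ0, hτT⟩ (hsub hσ) hτσ
    have hβτpos : 0 < β τ := hβpos τ ⟨hτ0, hτT⟩
    rw [abs_mul, abs_of_pos (Real.exp_pos _)]
    calc Real.exp (-∫ ρ in τ..σ, 2 * a ρ) * |Γ σ|
        ≤ Real.exp ((τ - σ)/2) * ((3*C/2) * β τ) := by
          apply mul_le_mul hexp (le_trans hΓ ?_) (abs_nonneg _) (Real.exp_pos _).le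
          nlinarith
      _ = g σ := by ring
  -- bound the integral
  have hnorm : |μ τ - 1| ≤ |∫ σ in τ..T, g σ| := by
    rw [heq, abs_neg]
    rw [← Real.norm_eq_abs]
    apply intervalIntegral.norm_integral_le_abs_of_norm_le _ hgint
    rw [Filter.eventually_iff_exists_mem]
    refine ⟨Set.uIoc τ T, self_mem_ae_restrict measurableSet_uIoc, ?_⟩
    intro σ hσ
    rw [Set.uIoc_of_le hτT] at hσ
    exact hpt σ ⟨hσ.1.le, hσ.2⟩
  -- compute ∫ g
  have hgval : ∫ σ in τ..T, Real.exp ((τ - σ)/2)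
      = 2 - 2 * Real.exp ((τ - T)/2) := by
    have : ∀ x ∈ Set.uIcc τ T, HasDerivAt (fun σ => -2 * Real.exp ((τ - σ)/2))
        (Real.exp ((τ - x)/2)) x := by
      intro x _
      have h1 : HasDerivAt (fun σ : ℝ => (τ - σ)/2) (-(1/2)) x := by
        have := ((hasDerivAt_id x).const_sub τ).div_const 2
        norm_num at this ⊢
        convert this using 1
      have h2 := (h1.exp).const_mul (-2 : ℝ)
      exact h2.congr_deriv (by ring)
    rw [intervalIntegral.integral_eq_sub_of_hasDerivAt this
      ((Real.continuous_exp.comp (by continuity)).intervalIntegrable τ T)]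
    simp; ring
  have hβτpos : 0 < β τ := hβpos τ ⟨hτ0, hτT⟩
  have hexp1 : 0 < Real.exp ((τ - T)/2) := Real.exp_pos _
  have hexple : Real.exp ((τ - T)/2) ≤ 1 := by
    rw [Real.exp_le_one_iff]; linarith
  calc |μ τ - 1| ≤ |∫ σ in τ..T, g σ| := hnorm
    _ = |(3*C/2) * β τ * (2 - 2 * Real.exp ((τ - T)/2))| := by
        rw [hg]
        rw [intervalIntegral.integral_const_mul, hgval]
    _ = (3*C/2) * β τ * (2 - 2 * Real.exp ((τ - T)/2)) := by
        rw [abs_of_nonneg]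
        apply mul_nonneg (by positivity)
        linarith
    _ ≤ 3 * C * β τ := by nlinarith [mul_pos (mul_pos hC hβτpos) hexp1]

/-- Volterra-type estimate for the ratio `μ = λ/λ₁` of scaling parameters:
if `μ(T) = 1`, `μ(τ) - 1 = -∫_τ^T e^{-∫_τ^σ 2a} Γ(σ) dσ` with
`|Γ| ≤ C(β + (1+μ⁻¹)(μ-1)² + β|μ-1|)`, `|a - α| ≤ 2β`, `a ≥ 1/4`, `β`
decreasing and `β(0)` small enough, then `|μ(τ) - 1| ≤ C'β(τ)` on `[0,T]`. -/
theorem stmt18 (C : ℝ) (hC : 0 < C) :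
    ∃ ε₀ > 0, ∃ C' > 0, ∀ T α : ℝ, 0 ≤ T → α ∈ Set.Icc (1 / 4 : ℝ) 1 →
      ∀ a β μ Γ : ℝ → ℝ,
      ContinuousOn a (Set.Icc 0 T) → ContinuousOn μ (Set.Icc 0 T) →
      ContinuousOn Γ (Set.Icc 0 T) →
      AntitoneOn β (Set.Icc 0 T) →
      (∀ τ ∈ Set.Icc (0 : ℝ) T, 0 < β τ) →
      β 0 ≤ ε₀ →
      (∀ τ ∈ Set.Icc (0 : ℝ) T, |a τ - α| ≤ 2 * β τ ∧ 1 / 4 ≤ a τ) →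
      (∀ τ ∈ Set.Icc (0 : ℝ) T, 0 < μ τ) →
      μ T = 1 →
      (∀ τ ∈ Set.Icc (0 : ℝ) T,
        μ τ - 1 = -∫ σ in τ..T, Real.exp (-∫ ρ in τ..σ, 2 * a ρ) * Γ σ) →
      (∀ σ ∈ Set.Icc (0 : ℝ) T,
        |Γ σ| ≤ C * (β σ + (1 + (μ σ)⁻¹) * (μ σ - 1) ^ 2 + β σ * |μ σ - 1|)) →
      ∀ τ ∈ Set.Icc (0 : ℝ) T, |μ τ - 1| ≤ C' * β τ := by
  refine ⟨(96*C^2 + 8*C)⁻¹, by positivity, 4*C, by positivity, ?_⟩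
  intro T α hT hα a β μ Γ hac hμc hΓc hβanti hβpos hβ0 haprop hμpos hμT heq hΓ
  set ε₀ : ℝ := (96*C^2 + 8*C)⁻¹ with hε₀
  have hε₀pos : 0 < ε₀ := by positivity
  have hε₀' : (96*C^2 + 8*C) * ε₀ = 1 := by
    rw [hε₀]; field_simp
  have h4Cε : 4*C*ε₀ ≤ 1/2 := by
    nlinarith [mul_pos (mul_pos hC hC) hε₀pos]
  have ha4 : ∀ σ ∈ Set.Icc (0:ℝ) T, 1/4 ≤ a σ := fun σ hσ => (haprop σ hσ).2
  have h0T : (0:ℝ) ∈ Set.Icc (0:ℝ) T := ⟨le_rfl, hT⟩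
  have hTT : T ∈ Set.Icc (0:ℝ) T := ⟨hT, le_rfl⟩
  have hβε : ∀ σ ∈ Set.Icc (0:ℝ) T, β σ ≤ ε₀ := fun σ hσ =>
    le_trans (hβanti h0T hσ hσ.1) hβ0
  -- key: if the weak bound holds on [τ', T], then |Γ| ≤ (3C/2)β there
  have hΓkey : ∀ τ' ∈ Set.Icc (0:ℝ) T,
      (∀ σ ∈ Set.Icc τ' T, |μ σ - 1| ≤ 4*C*β σ) →
      ∀ σ ∈ Set.Icc τ' T, |Γ σ| ≤ (3*C/2) * β σ := by
    intro τ' hτ' hweak σ hσ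
    have hσ0T : σ ∈ Set.Icc (0:ℝ) T := ⟨le_trans hτ'.1 hσ.1, hσ.2⟩
    have hb := hweak σ hσ
    have hβσ : 0 < β σ := hβpos σ hσ0T
    have hβσε : β σ ≤ ε₀ := hβε σ hσ0T
    have hb4ε : |μ σ - 1| ≤ 4*C*ε₀ := le_trans hb (by nlinarith)
    have hhalf : |μ σ - 1| ≤ 1/2 := le_trans hb4ε h4Cε
    have hμhalf : (1:ℝ)/2 ≤ μ σ := by
      have := (abs_le.1 hhalf).1; linarith
    have h13 : 1 + (μ σ)⁻¹ ≤ 3 := by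
      have : (μ σ)⁻¹ ≤ 2 := by
        rw [inv_le_comm₀ (hμpos σ hσ0T) (by norm_num)]; linarith
      linarith
    have hsq : (μ σ - 1)^2 ≤ (4*C*ε₀) * (4*C*β σ) := by
      rw [← sq_abs]
      nlinarith [abs_nonneg (μ σ - 1),
        mul_nonneg (abs_nonneg (μ σ - 1)) (sub_nonneg.2 hb),
        mul_nonneg (sub_nonneg.2 hb4ε) (by positivity : (0:ℝ) ≤ 4*C*β σ)]
    have t1 : (1 + (μ σ)⁻¹) * (μ σ - 1)^2 ≤ 3 * ((4*C*ε₀) * (4*C*β σ)) := by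
      apply mul_le_mul h13 hsq (sq_nonneg _) (by norm_num)
    have t2 : β σ * |μ σ - 1| ≤ β σ * (4*C*ε₀) :=
      mul_le_mul_of_nonneg_left hb4ε hβσ.le
    have t3 : (96*C^2 + 8*C) * ε₀ * β σ = β σ := by rw [hε₀', one_mul]
    have hmain : β σ + (1 + (μ σ)⁻¹) * (μ σ - 1)^2 + β σ * |μ σ - 1|
        ≤ (3/2) * β σ := by nlinarith [t1, t2, t3]
    calc |Γ σ| ≤ C * (β σ + (1 + (μ σ)⁻¹) * (μ σ - 1)^2 + β σ * |μ σ - 1|) :=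
          hΓ σ hσ0T
      _ ≤ C * ((3/2) * β σ) := mul_le_mul_of_nonneg_left hmain hC.le
      _ = (3*C/2) * β σ := by ring
  -- the bootstrap set
  set A : Set ℝ := {τ' | τ' ∈ Set.Icc (0:ℝ) T ∧
      ∀ σ ∈ Set.Icc τ' T, |μ σ - 1| ≤ 4*C*β σ} with hA
  have hTA : T ∈ A := by
    refine ⟨hTT, fun σ hσ => ?_⟩
    have hσT : σ = T := le_antisymm hσ.2 hσ.1
    rw [hσT, hμT]
    simp only [sub_self, abs_zero]
    have := hβpos T hTT
    positivity
  have hAne : A.Nonempty := ⟨T, hTA⟩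
  have hAbdd : BddBelow A := ⟨0, fun x hx => hx.1.1⟩
  set m := sInf A with hm
  have hm0 : 0 ≤ m := le_csInf hAne (fun x hx => hx.1.1)
  have hmT : m ≤ T := csInf_le hAbdd hTA
  have hm0T : m ∈ Set.Icc (0:ℝ) T := ⟨hm0, hmT⟩
  -- bound strictly above m
  have hgt : ∀ σ, m < σ → σ ≤ T → |μ σ - 1| ≤ 4*C*β σ := by
    intro σ hmσ hσT
    obtain ⟨x, hxA, hxσ⟩ := exists_lt_of_csInf_lt hAne hmσ
    exact hxA.2 σ ⟨hxσ.le, hσT⟩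
  -- bound at m itself (limit from the right, or trivially if m = T)
  have hmA : ∀ σ ∈ Set.Icc m T, |μ σ - 1| ≤ 4*C*β σ := by
    have hmm : |μ m - 1| ≤ 4*C*β m := by
      rcases eq_or_lt_of_le hmT with hT' | hmT'
      · rw [hT', hμT]
        simp only [sub_self, abs_zero]
        have := hβpos T hTT
        positivity
      · have h1 : ContinuousWithinAt μ (Set.Ioc m T) m :=
          (hμc m hm0T).mono (fun x hx => ⟨hm0.trans hx.1.le, hx.2⟩)
        have hten : Filter.Tendsto (fun x => |μ x - 1|)
            (nhdsWithin m (Set.Ioc m T)) (nhds (|μ m - 1|)) :=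
          (continuous_abs.tendsto _).comp (h1.sub tendsto_const_nhds)
        have hne : (nhdsWithin m (Set.Ioc m T)).NeBot :=
          left_nhdsWithin_Ioc_neBot hmT'
        refine le_of_tendsto hten ?_
        filter_upwards [self_mem_nhdsWithin] with x hx
        have hx0T : x ∈ Set.Icc (0:ℝ) T := ⟨hm0.trans hx.1.le, hx.2⟩
        have hβxm : β x ≤ β m := hβanti hm0T hx0T hx.1.le
        calc |μ x - 1| ≤ 4*C*β x := hgt x hx.1 hx.2
          _ ≤ 4*C*β m := by nlinarith
    intro σ hσ
    rcases eq_or_lt_of_le hσ.1 with h | h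
    · rw [← h]; exact hmm
    · exact hgt σ h hσ.2
  -- improved bound at m
  have himp : |μ m - 1| ≤ 3*C*β m := by
    apply est18 C T hC a β μ Γ hac hΓc hβanti hβpos ha4 m hm0T (heq m hm0T)
    exact hΓkey m hm0T hmA
  -- show m = 0
  have hmeq : m = 0 := by
    by_contra hne0
    have hmpos : 0 < m := lt_of_le_of_ne hm0 (Ne.symm hne0)
    have hβm : 0 < β m := hβpos m hm0T
    -- continuity of μ at m within Icc 0 T
    have hcm : ContinuousWithinAt μ (Set.Icc 0 T) m := hμc m hm0T
    rw [Metric.continuousWithinAt_iff] at hcm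
    obtain ⟨δ, hδpos, hδ⟩ := hcm (C * β m) (by positivity)
    set τ' := max 0 (m - δ/2) with hτ'
    have hτ'0 : 0 ≤ τ' := le_max_left _ _
    have hτ'm : τ' < m := by
      apply max_lt hmpos; linarith
    have hτ'T : τ' ≤ T := hτ'm.le.trans hmT
    have hτ'A : τ' ∈ A := by
      refine ⟨⟨hτ'0, hτ'T⟩, fun σ hσ => ?_⟩
      rcases le_or_gt m σ with h | h
      · exact hmA σ ⟨h, hσ.2⟩
      · -- τ' ≤ σ < m
        have hσ0T : σ ∈ Set.Icc (0:ℝ) T := ⟨hτ'0.trans hσ.1, hσ.2⟩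
        have hdist : dist σ m < δ := by
          rw [Real.dist_eq, abs_of_nonpos (by linarith)]
          have h1 : m - δ/2 ≤ τ' := le_max_right _ _
          have h2 := hσ.1
          linarith
        have hclose := hδ hσ0T hdist
        rw [Real.dist_eq] at hclose
        have : |μ σ - 1| ≤ |μ σ - μ m| + |μ m - 1| := by
          calc |μ σ - 1| = |(μ σ - μ m) + (μ m - 1)| := by congr 1; ring
            _ ≤ |μ σ - μ m| + |μ m - 1| := abs_add_le _ _
        have hβσm : β m ≤ β σ := hβanti hσ0T hm0T h.le
        nlinarith [hclose, himp, this]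
    have : m ≤ τ' := csInf_le hAbdd hτ'A
    linarith
  -- conclude
  intro τ hτ
  have := hmA τ (hmeq ▸ hτ)
  linarith
end

section
/- Suppose nonneg. quantities M₁, M₂ satisfy on [0,T]: M₂ ≤ C(M₂(0) + ε^{1/2}M₁(0) + ε^{1/3}M₁^{2/3}M₂^{1/3} + M₂² + M₂^p + ε^{κ/2}(1 + M₂ + M₁A + M₁² + M₁^p)) and M₁ ≤ C(M₁(0) + ε^{κ/2}(1 + M₁A + M₁² + M₁^p) + M₂M₁ + M₁M₂^{p-1}), with A ≤ C'(1 + εM₁(1+A) + εM₁² + ε^{2p-2}M₁^p) solvable for A, and M₁, M₂, A continuous nondecreasing with M₁(0), A(0) ≲ 1, M₂(0) ≪ 1. Then if M₁, M₂, A ≤ ε^{-κ/2} on [0,T] and ε is small enough, in fact M₁ ≲ M₁(0) + ε^{κ/2}, M₂ ≲ M₂(0) + ε^{κ/2}, and A, M₁ ≲ 1, M₂ ≪ 1 on [0,T]. -/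
open Real Set

-- existence of small ε with ε^a ≤ c
lemma aux_rpow_small (a c : ℝ) (ha : 0 < a) (hc : 0 < c) :
    ∃ x : ℝ, 0 < x ∧ ∀ ε : ℝ, 0 ≤ ε → ε ≤ x → ε ^ a ≤ c := by
  refine ⟨min 1 (c ^ a⁻¹), lt_min one_pos (Real.rpow_pos_of_pos hc _), ?_⟩
  intro ε hε hεx
  calc ε ^ a ≤ (c ^ a⁻¹) ^ a :=
        Real.rpow_le_rpow hε (le_trans hεx (min_le_right _ _)) ha.le
    _ = c := Real.rpow_inv_rpow hc.le ha.ne'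

lemma aux_cube (y : ℝ) (hy : 0 ≤ y) : y ^ ((1:ℝ)/3) ≤ 1 + y := by
  rcases le_total y 1 with h | h
  · have := Real.rpow_le_one hy h (by norm_num : (0:ℝ) ≤ 1/3)
    linarith
  · have h1 : y ^ ((1:ℝ)/3) ≤ y ^ (1:ℝ) :=
      Real.rpow_le_rpow_of_exponent_le h (by norm_num)
    rw [Real.rpow_one] at h1
    linarith

-- connectedness bootstrap
lemma aux_clopen {T K η : ℝ} (hT : 0 ≤ T) {f g : ℝ → ℝ}
    (hf : ContinuousOn f (Set.Icc 0 T)) (hg : ContinuousOn g (Set.Icc 0 T))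
    (h0f : f 0 ≤ K) (h0g : g 0 ≤ η)
    (himp : ∀ t ∈ Set.Icc 0 T, f t ≤ K → g t ≤ η → f t < K ∧ g t < η) :
    ∀ t ∈ Set.Icc 0 T, f t ≤ K ∧ g t ≤ η := by
  have hconn : ConnectedSpace (Set.Icc (0:ℝ) T) :=
    Subtype.connectedSpace ⟨⟨0, le_refl 0, hT⟩, isPreconnected_Icc⟩
  set V : Set (Set.Icc (0:ℝ) T) := {x | f x ≤ K ∧ g x ≤ η} with hV
  have hfc : Continuous (fun x : Set.Icc (0:ℝ) T => f x) := hf.restrict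
  have hgc : Continuous (fun x : Set.Icc (0:ℝ) T => g x) := hg.restrict
  have hVeq : V = {x : Set.Icc (0:ℝ) T | f x < K ∧ g x < η} := by
    apply Set.Subset.antisymm
    · intro x hx
      exact himp x x.2 hx.1 hx.2
    · intro x hx
      exact ⟨hx.1.le, hx.2.le⟩
  have hopen : IsOpen V := by
    rw [hVeq]
    exact (isOpen_lt hfc continuous_const).inter (isOpen_lt hgc continuous_const)
  have hclosed : IsClosed V :=
    (isClosed_le hfc continuous_const).inter (isClosed_le hgc continuous_const)
  have huniv : V = Set.univ :=
    IsClopen.eq_univ ⟨hclosed, hopen⟩ ⟨⟨0, le_refl 0, hT⟩, h0f, h0g⟩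
  intro t ht
  have : (⟨t, ht⟩ : Set.Icc (0:ℝ) T) ∈ V := huniv ▸ Set.mem_univ _
  exact this


set_option maxHeartbeats 1000000

/-- Bootstrap (Corollary 4.2): if the majorants `M₁, M₂, A` satisfy the stated
system of inequalities with small parameter `ε = β(0)`, and an a priori bound
of size `ε^{-κ/2}`, then in fact `M₁ ≲ M₁(0) + ε^{κ/2}`,
`M₂ ≲ M₂(0) + ε^{κ/2}`, `A, M₁ ≲ 1` and `M₂ ≪ 1`. -/
theorem stmt19 (p : ℝ) (hp : 1 < p) (C C' : ℝ) (hC : 0 < C) (hC' : 0 < C') :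
    let κ : ℝ := min (1 / 2) ((p - 1) / 2)
    ∃ C'' > 0, ∀ δ' : ℝ, 0 < δ' → ∃ ε₀ > 0, ∃ δ > 0,
      ∀ ε : ℝ, 0 < ε → ε ≤ ε₀ → ∀ T : ℝ, 0 ≤ T → ∀ M₁ M₂ A : ℝ → ℝ,
      ContinuousOn M₁ (Set.Icc 0 T) → ContinuousOn M₂ (Set.Icc 0 T) →
      ContinuousOn A (Set.Icc 0 T) →
      MonotoneOn M₁ (Set.Icc 0 T) → MonotoneOn M₂ (Set.Icc 0 T) →
      MonotoneOn A (Set.Icc 0 T) →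
      (∀ t ∈ Set.Icc (0 : ℝ) T, 0 ≤ M₁ t ∧ 0 ≤ M₂ t ∧ 0 ≤ A t) →
      M₁ 0 ≤ 1 → A 0 ≤ 1 → M₂ 0 ≤ δ →
      (∀ t ∈ Set.Icc (0 : ℝ) T,
        M₂ t ≤ C * (M₂ 0 + ε ^ ((1 : ℝ) / 2) * M₁ 0
          + ε ^ ((1 : ℝ) / 3) * M₁ t ^ ((2 : ℝ) / 3) * M₂ t ^ ((1 : ℝ) / 3)
          + M₂ t ^ 2 + M₂ t ^ p
          + ε ^ (κ / 2) * (1 + M₂ t + M₁ t * A t + M₁ t ^ 2 + M₁ t ^ p))) →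
      (∀ t ∈ Set.Icc (0 : ℝ) T,
        M₁ t ≤ C * (M₁ 0 + ε ^ (κ / 2) * (1 + M₁ t * A t + M₁ t ^ 2 + M₁ t ^ p)
          + M₂ t * M₁ t + M₁ t * M₂ t ^ (p - 1))) →
      (∀ t ∈ Set.Icc (0 : ℝ) T,
        A t ≤ C' * (1 + ε * M₁ t * (1 + A t) + ε * M₁ t ^ 2
          + ε ^ (2 * p - 2) * M₁ t ^ p)) →
      (∀ t ∈ Set.Icc (0 : ℝ) T,
        M₁ t ≤ ε ^ (-(κ / 2)) ∧ M₂ t ≤ ε ^ (-(κ / 2)) ∧ A t ≤ ε ^ (-(κ / 2))) →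
      ∀ t ∈ Set.Icc (0 : ℝ) T,
        M₁ t ≤ C'' * (M₁ 0 + ε ^ (κ / 2)) ∧
        M₂ t ≤ C'' * (M₂ 0 + ε ^ (κ / 2)) ∧
        M₁ t ≤ C'' ∧ A t ≤ C'' ∧ M₂ t ≤ δ' := by
  intro κ
  have hκ1 : κ ≤ 1/2 := min_le_left _ _
  have hκ2 : κ ≤ (p-1)/2 := min_le_right _ _
  have hκpos : 0 < κ := lt_min (by norm_num) (by linarith)
  clear_value κ
  have hq : 0 < 2*p - 2 - p*(κ/2) := by
    have h1 : p*κ ≤ p*(1/2) := mul_le_mul_of_nonneg_left hκ1 (by linarith)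
    have h2 : p*κ ≤ p*((p-1)/2) := mul_le_mul_of_nonneg_left hκ2 (by linarith)
    rcases le_total p 2 with h | h
    · nlinarith
    · nlinarith
  set K : ℝ := 2*C + 2 with hKdef
  have hKpos : 0 < K := by positivity
  have hK23pos : (0:ℝ) < K ^ ((2:ℝ)/3) := Real.rpow_pos_of_pos hKpos _
  set η : ℝ := min 1 (min ((8*C)⁻¹) (((8*C)⁻¹) ^ (p-1)⁻¹)) with hηdef
  have h8C : (0:ℝ) < (8*C)⁻¹ := by positivity
  have hηpos : 0 < η :=
    lt_min one_pos (lt_min h8C (Real.rpow_pos_of_pos h8C _))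
  have hη1 : η ≤ 1 := min_le_left _ _
  have hη2 : η ≤ (8*C)⁻¹ := le_trans (min_le_right _ _) (min_le_left _ _)
  have hη3 : η ^ (p-1) ≤ (8*C)⁻¹ := by
    have h := Real.rpow_le_rpow hηpos.le
      (le_trans (min_le_right _ _) (min_le_right _ _)) (by linarith : (0:ℝ) ≤ p-1)
    rwa [Real.rpow_inv_rpow h8C.le (by linarith : p - 1 ≠ 0)] at h
  set B : ℝ := 1 + 2*C'*K + K^2 + K ^ p with hBdef
  have hKp : (0:ℝ) < K ^ p := Real.rpow_pos_of_pos hKpos _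
  have hBpos : 0 < B := by positivity
  set D : ℝ := 2*C*(1 + B + K ^ ((2:ℝ)/3)) with hDdef
  have hDpos : 0 < D := by positivity
  refine ⟨2*C*(1+B) + D + K + 2*C' + 1, by positivity, ?_⟩
  intro δ' hδ'
  set m : ℝ := min (η/2) δ' with hmdef
  have hm : 0 < m := lt_min (by positivity) hδ'
  obtain ⟨x1, hx1, hx1'⟩ := aux_rpow_small (1-κ) (1/4) (by linarith) (by norm_num)
  obtain ⟨x2, hx2, hx2'⟩ := aux_rpow_small (2*p-2-p*(κ/2)) (1/4) hq (by norm_num)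
  obtain ⟨x3, hx3, hx3'⟩ := aux_rpow_small (κ/2)
    (min ((2*C*B)⁻¹) (min ((8*C)⁻¹) (m/(2*D)))) (by linarith)
    (lt_min (by positivity) (lt_min h8C (by positivity)))
  obtain ⟨x4, hx4, hx4'⟩ := aux_rpow_small ((1:ℝ)/3)
    ((8*C*(1+K ^ ((2:ℝ)/3)))⁻¹) (by norm_num) (by positivity)
  refine ⟨min 1 (min x1 (min x2 (min x3 x4))), by positivity, m/(4*C+4), by positivity, ?_⟩
  intro ε hε hεε₀ T hT M₁ M₂ A hcM₁ hcM₂ hcA hmono₁ hmono₂ hmonoA hnn h10 hA0 h20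
    hIneq2 hIneq1 hIneqA hap
  -- basic ε facts
  have hε1 : ε ≤ 1 := le_trans hεε₀ (min_le_left _ _)
  have hεx1 : ε ≤ x1 := le_trans hεε₀ (le_trans (min_le_right _ _) (min_le_left _ _))
  have hεx2 : ε ≤ x2 := le_trans hεε₀ (le_trans (min_le_right _ _)
    (le_trans (min_le_right _ _) (min_le_left _ _)))
  have hεx3 : ε ≤ x3 := le_trans hεε₀ (le_trans (min_le_right _ _)
    (le_trans (min_le_right _ _) (le_trans (min_le_right _ _) (min_le_left _ _))))
  have hεx4 : ε ≤ x4 := le_trans hεε₀ (le_trans (min_le_right _ _)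
    (le_trans (min_le_right _ _) (le_trans (min_le_right _ _) (min_le_right _ _))))
  have he1 : ε ^ (1-κ) ≤ 1/4 := hx1' ε hε.le hεx1
  have he2 : ε ^ (2*p-2-p*(κ/2)) ≤ 1/4 := hx2' ε hε.le hεx2
  have he3 := hx3' ε hε.le hεx3
  have he3a : ε ^ (κ/2) ≤ (2*C*B)⁻¹ := le_trans he3 (min_le_left _ _)
  have he3b : ε ^ (κ/2) ≤ (8*C)⁻¹ :=
    le_trans he3 (le_trans (min_le_right _ _) (min_le_left _ _))
  have he3c : ε ^ (κ/2) ≤ m/(2*D) :=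
    le_trans he3 (le_trans (min_le_right _ _) (min_le_right _ _))
  have he4 : ε ^ ((1:ℝ)/3) ≤ (8*C*(1+K ^ ((2:ℝ)/3)))⁻¹ := hx4' ε hε.le hεx4
  have hepos : (0:ℝ) < ε ^ (κ/2) := Real.rpow_pos_of_pos hε _
  have hinv1 : (1:ℝ) ≤ ε ^ (-(κ/2)) := by
    have := Real.rpow_le_rpow_of_exponent_ge hε hε1 (by linarith : -(κ/2) ≤ 0)
    rwa [Real.rpow_zero] at this
  have hinvnn : (0:ℝ) ≤ ε ^ (-(κ/2)) := by linarith
  have h0mem : (0:ℝ) ∈ Set.Icc (0:ℝ) T := ⟨le_refl 0, hT⟩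
  have hM10nn : 0 ≤ M₁ 0 := (hnn 0 h0mem).1
  have hM20nn : 0 ≤ M₂ 0 := (hnn 0 h0mem).2.1
  -- Step 1: A ≤ 2C' on [0,T]
  have hA2C' : ∀ t ∈ Set.Icc (0:ℝ) T, A t ≤ 2*C' := by
    intro t ht
    obtain ⟨ha1, ha2, ha3⟩ := hap t ht
    obtain ⟨hM1n, hM2n, hAn⟩ := hnn t ht
    have key : ε * ε ^ (-(κ/2)) * (2 * ε ^ (-(κ/2))) = 2 * ε ^ (1-κ) := by
      rw [show (1 - κ) = 1 + -(κ/2) + -(κ/2) by ring, Real.rpow_add hε,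
        Real.rpow_add hε, Real.rpow_one]
      ring
    have t1 : ε * M₁ t * (1 + A t) ≤ 2 * ε ^ (1-κ) := by
      rw [← key]
      apply mul_le_mul (mul_le_mul_of_nonneg_left ha1 hε.le) (by linarith)
        (by linarith) (by positivity)
    have t2 : ε * M₁ t ^ 2 ≤ ε ^ (1-κ) := by
      have h2 : M₁ t ^ 2 ≤ (ε ^ (-(κ/2))) ^ 2 := pow_le_pow_left₀ hM1n ha1 2
      have key2 : ε * (ε ^ (-(κ/2))) ^ 2 = ε ^ (1-κ) := by
        rw [sq, show (1 - κ) = 1 + -(κ/2) + -(κ/2) by ring, Real.rpow_add hε,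
          Real.rpow_add hε, Real.rpow_one]
        ring
      calc ε * M₁ t ^ 2 ≤ ε * (ε ^ (-(κ/2))) ^ 2 :=
            mul_le_mul_of_nonneg_left h2 hε.le
        _ = ε ^ (1-κ) := key2
    have t3 : ε ^ (2*p-2) * M₁ t ^ p ≤ ε ^ (2*p-2-p*(κ/2)) := by
      have h2 : M₁ t ^ p ≤ (ε ^ (-(κ/2))) ^ p :=
        Real.rpow_le_rpow hM1n ha1 (by linarith)
      have key3 : ε ^ (2*p-2) * (ε ^ (-(κ/2))) ^ p = ε ^ (2*p-2-p*(κ/2)) := by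
        rw [← Real.rpow_mul hε.le, ← Real.rpow_add hε]
        ring_nf
      calc ε ^ (2*p-2) * M₁ t ^ p ≤ ε ^ (2*p-2) * (ε ^ (-(κ/2))) ^ p :=
            mul_le_mul_of_nonneg_left h2 (Real.rpow_nonneg hε.le _)
        _ = ε ^ (2*p-2-p*(κ/2)) := key3
    have hsum : 1 + ε * M₁ t * (1 + A t) + ε * M₁ t ^ 2 + ε ^ (2*p-2) * M₁ t ^ p ≤ 2 := by
      linarith
    calc A t ≤ C' * (1 + ε * M₁ t * (1 + A t) + ε * M₁ t ^ 2
          + ε ^ (2*p-2) * M₁ t ^ p) := hIneqA t ht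
      _ ≤ C' * 2 := mul_le_mul_of_nonneg_left hsum hC'.le
      _ = 2*C' := by ring
  -- Step 2: pointwise improvement under M₁ ≤ K, M₂ ≤ η
  have himpr : ∀ t ∈ Set.Icc (0:ℝ) T, M₁ t ≤ K → M₂ t ≤ η →
      M₁ t ≤ 2*C*M₁ 0 + 2*C*B*ε ^ (κ/2) ∧ M₂ t ≤ 2*C*M₂ 0 + D*ε ^ (κ/2) := by
    intro t ht h1K h2η
    obtain ⟨hM1n, hM2n, hAn⟩ := hnn t ht
    have hA' := hA2C' t ht
    have b1 : M₁ t * A t ≤ K * (2*C') := mul_le_mul h1K hA' hAn hKpos.le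
    have b2 : M₁ t ^ 2 ≤ K ^ 2 := pow_le_pow_left₀ hM1n h1K 2
    have b3 : M₁ t ^ p ≤ K ^ p := Real.rpow_le_rpow hM1n h1K (by linarith)
    have b4 : M₂ t ^ (p-1) ≤ (8*C)⁻¹ :=
      le_trans (Real.rpow_le_rpow hM2n h2η (by linarith)) hη3
    have hparen : 1 + M₁ t * A t + M₁ t ^ 2 + M₁ t ^ p ≤ B := by
      rw [hBdef]; linarith
    constructor
    · -- M₁ bound
      have b5 : M₂ t * M₁ t ≤ (8*C)⁻¹ * M₁ t :=
        mul_le_mul_of_nonneg_right (h2η.trans hη2) hM1n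
      have b6 : M₁ t * M₂ t ^ (p-1) ≤ M₁ t * (8*C)⁻¹ :=
        mul_le_mul_of_nonneg_left b4 hM1n
      have hin : M₁ 0 + ε ^ (κ/2) * (1 + M₁ t * A t + M₁ t ^ 2 + M₁ t ^ p)
          + M₂ t * M₁ t + M₁ t * M₂ t ^ (p-1)
          ≤ M₁ 0 + ε ^ (κ/2) * B + (8*C)⁻¹ * M₁ t + M₁ t * (8*C)⁻¹ := by
        have := mul_le_mul_of_nonneg_left hparen hepos.le
        linarith
      have h2 : M₁ t ≤ C * (M₁ 0 + ε ^ (κ/2) * B + (8*C)⁻¹ * M₁ t + M₁ t * (8*C)⁻¹) :=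
        (hIneq1 t ht).trans (mul_le_mul_of_nonneg_left hin hC.le)
      have h3 : C * (M₁ 0 + ε ^ (κ/2) * B + (8*C)⁻¹ * M₁ t + M₁ t * (8*C)⁻¹)
          = C * M₁ 0 + C * B * ε ^ (κ/2) + M₁ t / 4 := by
        field_simp
        ring
      rw [h3] at h2
      have hcm : 0 ≤ C * M₁ 0 := mul_nonneg hC.le hM10nn
      have hcb : 0 ≤ C * B * ε ^ (κ/2) := by positivity
      linarith
    · -- M₂ bound
      have hM2C : 0 ≤ M₂ t * (8*C)⁻¹ := by positivity
      have c1 : ε ^ ((1:ℝ)/2) * M₁ 0 ≤ ε ^ (κ/2) := by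
        have h1 : ε ^ ((1:ℝ)/2) ≤ ε ^ (κ/2) :=
          Real.rpow_le_rpow_of_exponent_ge hε hε1 (by linarith)
        calc ε ^ ((1:ℝ)/2) * M₁ 0 ≤ ε ^ ((1:ℝ)/2) * 1 :=
              mul_le_mul_of_nonneg_left h10 (Real.rpow_nonneg hε.le _)
          _ = ε ^ ((1:ℝ)/2) := mul_one _
          _ ≤ ε ^ (κ/2) := h1
      have c2 : ε ^ ((1:ℝ)/3) * M₁ t ^ ((2:ℝ)/3) * M₂ t ^ ((1:ℝ)/3)
          ≤ ε ^ ((1:ℝ)/3) * K ^ ((2:ℝ)/3) * (1 + M₂ t) := by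
        apply mul_le_mul
        · exact mul_le_mul_of_nonneg_left (Real.rpow_le_rpow hM1n h1K (by norm_num))
            (Real.rpow_nonneg hε.le _)
        · exact aux_cube _ hM2n
        · exact Real.rpow_nonneg hM2n _
        · positivity
      have c3 : M₂ t ^ 2 ≤ (8*C)⁻¹ * M₂ t := by
        rw [sq]
        exact mul_le_mul_of_nonneg_right (h2η.trans hη2) hM2n
      have c4 : M₂ t ^ p ≤ (8*C)⁻¹ * M₂ t := by
        rcases hM2n.eq_or_lt with h | h
        · rw [← h, Real.zero_rpow (by linarith : p ≠ 0), mul_zero]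
        · have : M₂ t ^ p = M₂ t ^ (p-1) * M₂ t := by
            rw [show p = (p-1) + 1 by ring, Real.rpow_add h, Real.rpow_one]
            ring_nf
          rw [this]
          exact mul_le_mul_of_nonneg_right b4 hM2n
      have hparen2 : 1 + M₂ t + M₁ t * A t + M₁ t ^ 2 + M₁ t ^ p ≤ B + M₂ t := by
        linarith
      have hin2 : M₂ 0 + ε ^ ((1:ℝ)/2) * M₁ 0
          + ε ^ ((1:ℝ)/3) * M₁ t ^ ((2:ℝ)/3) * M₂ t ^ ((1:ℝ)/3)
          + M₂ t ^ 2 + M₂ t ^ p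
          + ε ^ (κ/2) * (1 + M₂ t + M₁ t * A t + M₁ t ^ 2 + M₁ t ^ p)
          ≤ M₂ 0 + ε ^ (κ/2) + ε ^ ((1:ℝ)/3) * K ^ ((2:ℝ)/3) * (1 + M₂ t)
            + (8*C)⁻¹ * M₂ t + (8*C)⁻¹ * M₂ t + ε ^ (κ/2) * (B + M₂ t) := by
        have := mul_le_mul_of_nonneg_left hparen2 hepos.le
        linarith
      have h2 : M₂ t ≤ C * (M₂ 0 + ε ^ (κ/2) + ε ^ ((1:ℝ)/3) * K ^ ((2:ℝ)/3) * (1 + M₂ t)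
          + (8*C)⁻¹ * M₂ t + (8*C)⁻¹ * M₂ t + ε ^ (κ/2) * (B + M₂ t)) :=
        (hIneq2 t ht).trans (mul_le_mul_of_nonneg_left hin2 hC.le)
      -- bound the coefficient of M₂ t
      have d0 : C * (8*C)⁻¹ = 1/8 := by
        have h := mul_inv_cancel₀ (show (8*C:ℝ) ≠ 0 by positivity)
        linear_combination h / 8
      have d1 : C * (ε ^ ((1:ℝ)/3) * K ^ ((2:ℝ)/3)) ≤ 1/8 := by
        have h8 : (0:ℝ) < 8*C*(1+K ^ ((2:ℝ)/3)) := by positivity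
        have hck : (0:ℝ) ≤ C * K ^ ((2:ℝ)/3) := by positivity
        have step : C * K ^ ((2:ℝ)/3) * (8*C*(1+K ^ ((2:ℝ)/3)))⁻¹ ≤ 1/8 := by
          rw [mul_inv_le_iff₀ h8]
          have := mul_nonneg hC.le hK23pos.le
          linarith [hC.le]
        calc C * (ε ^ ((1:ℝ)/3) * K ^ ((2:ℝ)/3))
            = C * K ^ ((2:ℝ)/3) * ε ^ ((1:ℝ)/3) := by ring
          _ ≤ C * K ^ ((2:ℝ)/3) * (8*C*(1+K ^ ((2:ℝ)/3)))⁻¹ :=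
              mul_le_mul_of_nonneg_left he4 hck
          _ ≤ 1/8 := step
      have d2 : C * (ε ^ ((1:ℝ)/3) * K ^ ((2:ℝ)/3)) * M₂ t ≤ (1/8) * M₂ t :=
        mul_le_mul_of_nonneg_right d1 hM2n
      have d3 : C * ε ^ (κ/2) ≤ 1/8 := by
        calc C * ε ^ (κ/2) ≤ C * (8*C)⁻¹ := mul_le_mul_of_nonneg_left he3b hC.le
          _ = 1/8 := d0
      have d4 : C * ε ^ (κ/2) * M₂ t ≤ (1/8) * M₂ t :=
        mul_le_mul_of_nonneg_right d3 hM2n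
      have c5 : ε ^ ((1:ℝ)/3) ≤ ε ^ (κ/2) :=
        Real.rpow_le_rpow_of_exponent_ge hε hε1 (by linarith)
      have c6 : C * (ε ^ ((1:ℝ)/3) * K ^ ((2:ℝ)/3)) ≤ C * K ^ ((2:ℝ)/3) * ε ^ (κ/2) := by
        calc C * (ε ^ ((1:ℝ)/3) * K ^ ((2:ℝ)/3)) = C * K ^ ((2:ℝ)/3) * ε ^ ((1:ℝ)/3) := by
              ring
          _ ≤ C * K ^ ((2:ℝ)/3) * ε ^ (κ/2) :=
              mul_le_mul_of_nonneg_left c5 (by positivity)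
      -- assemble
      have expand : C * (M₂ 0 + ε ^ (κ/2) + ε ^ ((1:ℝ)/3) * K ^ ((2:ℝ)/3) * (1 + M₂ t)
          + (8*C)⁻¹ * M₂ t + (8*C)⁻¹ * M₂ t + ε ^ (κ/2) * (B + M₂ t))
          = C * M₂ 0 + C * ε ^ (κ/2) + C * (ε ^ ((1:ℝ)/3) * K ^ ((2:ℝ)/3))
            + C * (ε ^ ((1:ℝ)/3) * K ^ ((2:ℝ)/3)) * M₂ t
            + C * (8*C)⁻¹ * M₂ t + C * (8*C)⁻¹ * M₂ t
            + C * B * ε ^ (κ/2) + C * ε ^ (κ/2) * M₂ t := by ring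
      rw [expand, d0] at h2
      have hCB : 0 ≤ C * B * ε ^ (κ/2) := by positivity
      have hCK : 0 ≤ C * K ^ ((2:ℝ)/3) * ε ^ (κ/2) := by positivity
      have hCM : 0 ≤ C * M₂ 0 := mul_nonneg hC.le hM20nn
      have hCe : 0 ≤ C * ε ^ (κ/2) := by positivity
      rw [hDdef]
      linarith [d2, d4, c6, hCM, hCB, hCK, hCe, h2]
  -- auxiliary smallness facts
  have hb : 2*C*B*ε ^ (κ/2) ≤ 1 := by
    have h := mul_le_mul_of_nonneg_left he3a (by positivity : (0:ℝ) ≤ 2*C*B)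
    rwa [mul_inv_cancel₀ (by positivity : (2*C*B:ℝ) ≠ 0)] at h
  have hde : D*ε ^ (κ/2) ≤ m/2 := by
    have h := mul_le_mul_of_nonneg_left he3c hDpos.le
    have heq : D * (m/(2*D)) = m/2 := by
      field_simp
    linarith [heq ▸ h]
  have h44 : (0:ℝ) < 4*C+4 := by positivity
  have h2Cδ : 2*C*(m/(4*C+4)) ≤ m/2 := by
    rw [mul_div_assoc', div_le_div_iff₀ h44 two_pos]
    have : 0 ≤ C*m := mul_nonneg hC.le hm.le
    linarith [hm.le]
  have hc2 : 2*C*M₂ 0 ≤ m/2 :=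
    le_trans (mul_le_mul_of_nonneg_left h20 (by positivity)) h2Cδ
  have hmη : m ≤ η/2 := min_le_left _ _
  have hmδ' : m ≤ δ' := min_le_right _ _
  have hc1 : 2*C*M₁ 0 ≤ 2*C := by
    have := mul_le_mul_of_nonneg_left h10 (show (0:ℝ) ≤ 2*C by positivity)
    linarith
  -- Step 3: strict improvement
  have hstrict : ∀ t ∈ Set.Icc (0:ℝ) T, M₁ t ≤ K → M₂ t ≤ η → M₁ t < K ∧ M₂ t < η := by
    intro t ht h1 h2
    obtain ⟨i1, i2⟩ := himpr t ht h1 h2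
    constructor
    · rw [hKdef]
      linarith
    · linarith [hηpos]
  -- Step 4: continuity / connectedness
  have hall : ∀ t ∈ Set.Icc (0:ℝ) T, M₁ t ≤ K ∧ M₂ t ≤ η := by
    apply aux_clopen hT hcM₁ hcM₂ ?_ ?_ hstrict
    · rw [hKdef]; linarith
    · have h1 : m/(4*C+4) ≤ m := by
        rw [div_le_iff₀ h44]
        have : 0 ≤ m*(4*C+3) := mul_nonneg hm.le (by linarith)
        linarith
      linarith
  -- conclusion
  clear_value m D B η K
  intro t ht
  obtain ⟨hK1, hη1'⟩ := hall t ht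
  obtain ⟨i1, i2⟩ := himpr t ht hK1 hη1'
  have hCBnn : 0 ≤ 2*C*B := mul_nonneg (by linarith) hBpos.le
  have hCB1 : 0 ≤ 2*C*(1+B) := mul_nonneg (by linarith) (by linarith)
  have f1 : 0 ≤ 2*C*B*M₁ 0 := mul_nonneg hCBnn hM10nn
  have f2 : 0 ≤ 2*C*ε ^ (κ/2) := by positivity
  have hsum0 : 0 ≤ M₁ 0 + ε ^ (κ/2) := add_nonneg hM10nn hepos.le
  have f3 : 0 ≤ (D+K+2*C'+1)*(M₁ 0 + ε ^ (κ/2)) :=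
    mul_nonneg (by linarith [hDpos, hKpos]) hsum0
  have f4 : 0 ≤ (2*C*B+D+K+2*C'+1)*M₂ 0 :=
    mul_nonneg (by linarith [hDpos, hKpos]) hM20nn
  have f5 : 0 ≤ (2*C*(1+B)+K+2*C'+1)*ε ^ (κ/2) :=
    mul_nonneg (by linarith [hKpos]) hepos.le
  refine ⟨by linarith [i1, f1, f2, f3], by linarith [i2, f4, f5], ?_, ?_, by linarith⟩
  · linarith [i1, hc1, hb, hKdef, hDpos, hC', hCB1]
  · linarith [hA2C' t ht, hDpos, hKpos, hCB1]
end
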